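/- In the two-agent manipulation setting, let S = {a₁,…,a_k} ⊆ O with a₁ ≻₂ a₂ ≻₂ ⋯ ≻₂ a_k, and let ≻₁ᶜ be a canonical report for S. The following are equivalent: (i) S is achievable by agent 1; (ii) agent 1's allocation under (≻₁ᶜ, ≻₂) includes S; (iii) in the run of sequential allocation on (≻₁ᶜ, ≻₂), for each i ∈ {1,…,k}, every item that agent 2 has received before the step at which agent 1 makes his i-th pick is strictly preferred to a_i by agent 2 (with respect to ≻₂). -/

import Mathlib

/-- Sequential allocation: process the picking sequence in order; at each step the
agent whose turn it is receives his most-preferred (earliest in his ranking list)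
item among those not yet allocated. Returns each agent's allocation. -/
def seqAlloc {A I : Type*} [DecidableEq A] [DecidableEq I]
    (prefs : A → List I) : List A → Finset I → A → Finset I
  | [], _ => fun _ => ∅
  | a :: rest, rem =>
    match (prefs a).find? (fun o => decide (o ∈ rem)) with
    | none => seqAlloc prefs rest rem
    | some o => fun j =>
        if j = a then insert o (seqAlloc prefs rest (rem.erase o) j)
        else seqAlloc prefs rest (rem.erase o) j

/-- A report (strict linear order) over the item set `O`, given as a ranking list:
most preferred item first. -/
def IsReport {I : Type*} [DecidableEq I] (O : Finset I) (p : List I) : Prop :=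
  p.Nodup ∧ ∀ o, o ∈ p ↔ o ∈ O

/-- Two-agent sequential allocation: agent `0` ("agent 1") reports `p1`,
agent `1` ("agent 2") reports `p2`. -/
def alloc2 {I : Type*} [DecidableEq I] (p1 p2 : List I)
    (π : List (Fin 2)) (O : Finset I) : Fin 2 → Finset I :=
  seqAlloc (fun a => if a = 0 then p1 else p2) π O

/-- `S` is achievable by agent 1: some report gives agent 1 an allocation including `S`. -/
def Achievable {I : Type*} [DecidableEq I] (p2 : List I) (π : List (Fin 2))
    (O : Finset I) (S : Finset I) : Prop :=
  ∃ p1, IsReport O p1 ∧ S ⊆ alloc2 p1 p2 π O 0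

/-- `o` is strictly preferred to `o'` in the ranking list `p`. -/
def Prefers {I : Type*} [DecidableEq I] (p : List I) (o o' : I) : Prop :=
  p.idxOf o < p.idxOf o'

instance {I : Type*} [DecidableEq I] (p : List I) (o o' : I) : Decidable (Prefers p o o') :=
  inferInstanceAs (Decidable (_ < _))

/-- `u` is an additive utility consistent with the ranking `p` on item set `O`. -/
def Consistent {I : Type*} [DecidableEq I] (O : Finset I) (p : List I) (u : I → ℝ) : Prop :=
  (∀ o ∈ O, 0 < u o) ∧ ∀ o ∈ O, ∀ o' ∈ O, u o' < u o ↔ Prefers p o o'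

section Infra
variable {A I : Type*} [DecidableEq A] [DecidableEq I]

def remAfter (prefs : A → List I) : List A → Finset I → Finset I
  | [], rem => rem
  | a :: rest, rem =>
    match (prefs a).find? (fun o => decide (o ∈ rem)) with
    | none => remAfter prefs rest rem
    | some o => remAfter prefs rest (rem.erase o)

variable {prefs : A → List I}

lemma seqAlloc_nil (rem : Finset I) (b : A) : seqAlloc prefs [] rem b = ∅ := rfl
lemma remAfter_nil (rem : Finset I) : remAfter prefs [] rem = rem := rfl

lemma seqAlloc_cons_none {a : A} {rest : List A} {rem : Finset I}
    (h : (prefs a).find? (fun o => decide (o ∈ rem)) = none) (b : A) :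
    seqAlloc prefs (a :: rest) rem b = seqAlloc prefs rest rem b := by
  simp [seqAlloc, h]

lemma seqAlloc_cons_some {a : A} {rest : List A} {rem : Finset I} {o : I}
    (h : (prefs a).find? (fun o => decide (o ∈ rem)) = some o) (b : A) :
    seqAlloc prefs (a :: rest) rem b =
      if b = a then insert o (seqAlloc prefs rest (rem.erase o) b)
      else seqAlloc prefs rest (rem.erase o) b := by
  simp [seqAlloc, h]

lemma remAfter_cons_none {a : A} {rest : List A} {rem : Finset I}
    (h : (prefs a).find? (fun o => decide (o ∈ rem)) = none) :
    remAfter prefs (a :: rest) rem = remAfter prefs rest rem := by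
  simp [remAfter, h]

lemma remAfter_cons_some {a : A} {rest : List A} {rem : Finset I} {o : I}
    (h : (prefs a).find? (fun o => decide (o ∈ rem)) = some o) :
    remAfter prefs (a :: rest) rem = remAfter prefs rest (rem.erase o) := by
  simp [remAfter, h]

lemma remAfter_subset : ∀ (l : List A) (rem : Finset I), remAfter prefs l rem ⊆ rem := by
  intro l
  induction l with
  | nil => intro rem; simp [remAfter_nil]
  | cons a rest ih =>
    intro rem
    rcases h : (prefs a).find? (fun o => decide (o ∈ rem)) with _ | o
    · rw [remAfter_cons_none h]; exact ih rem
    · rw [remAfter_cons_some h]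
      exact (ih _).trans (Finset.erase_subset _ _)

lemma seqAlloc_subset : ∀ (l : List A) (rem : Finset I) (b : A), seqAlloc prefs l rem b ⊆ rem := by
  intro l
  induction l with
  | nil => intro rem b; simp [seqAlloc_nil]
  | cons a rest ih =>
    intro rem b
    rcases h : (prefs a).find? (fun o => decide (o ∈ rem)) with _ | o
    · rw [seqAlloc_cons_none h]; exact ih rem b
    · rw [seqAlloc_cons_some h]
      have ho : o ∈ rem := by
        have := List.find?_some h
        simpa using this
      have hsub : seqAlloc prefs rest (rem.erase o) b ⊆ rem :=
        (ih _ _).trans (Finset.erase_subset _ _)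
      split
      · intro x hx
        rcases Finset.mem_insert.mp hx with rfl | hx
        · exact ho
        · exact hsub hx
      · exact hsub

lemma not_mem_remAfter_of_mem_seqAlloc {l : List A} {rem : Finset I} {b : A} {x : I}
    (hx : x ∈ seqAlloc prefs l rem b) : x ∉ remAfter prefs l rem := by
  induction l generalizing rem with
  | nil => simp [seqAlloc_nil] at hx
  | cons a rest ih =>
    rcases h : (prefs a).find? (fun o => decide (o ∈ rem)) with _ | o
    · rw [seqAlloc_cons_none h] at hx; rw [remAfter_cons_none h]; exact ih hx
    · rw [seqAlloc_cons_some h] at hx; rw [remAfter_cons_some h]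
      by_cases hba : b = a
      · rw [if_pos hba] at hx
        rcases Finset.mem_insert.mp hx with rfl | hx
        · intro hc
          exact (Finset.notMem_erase x rem) (remAfter_subset _ _ hc)
        · exact ih hx
      · rw [if_neg hba] at hx; exact ih hx

lemma seqAlloc_disjoint {l : List A} {rem : Finset I} {b c : A} (hbc : b ≠ c) {x : I}
    (hx : x ∈ seqAlloc prefs l rem b) : x ∉ seqAlloc prefs l rem c := by
  induction l generalizing rem with
  | nil => simp [seqAlloc_nil] at hx
  | cons a rest ih =>
    rcases h : (prefs a).find? (fun o => decide (o ∈ rem)) with _ | o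
    · rw [seqAlloc_cons_none h] at hx ⊢; exact ih hx
    · rw [seqAlloc_cons_some h] at hx ⊢
      by_cases hba : b = a
      · rw [if_pos hba] at hx
        rw [if_neg (by rw [← hba]; exact hbc.symm)]
        rcases Finset.mem_insert.mp hx with rfl | hx
        · intro hc
          exact (Finset.notMem_erase x rem) (seqAlloc_subset _ _ _ hc)
        · exact ih hx
      · rw [if_neg hba] at hx
        by_cases hca : c = a
        · rw [if_pos hca]
          intro hc
          rcases Finset.mem_insert.mp hc with rfl | hc
          · exact (Finset.notMem_erase x rem) (seqAlloc_subset _ _ _ hx)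
          · exact ih hx hc
        · rw [if_neg hca]; exact ih hx

lemma mem_remAfter_or_alloc {l : List A} {rem : Finset I} {x : I} (hx : x ∈ rem) :
    x ∈ remAfter prefs l rem ∨ ∃ b, x ∈ seqAlloc prefs l rem b := by
  induction l generalizing rem with
  | nil => exact Or.inl hx
  | cons a rest ih =>
    rcases h : (prefs a).find? (fun o => decide (o ∈ rem)) with _ | o
    · rw [remAfter_cons_none h]
      rcases ih hx with h1 | ⟨b, hb⟩
      · exact Or.inl h1
      · exact Or.inr ⟨b, by rw [seqAlloc_cons_none h]; exact hb⟩
    · rw [remAfter_cons_some h]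
      by_cases hxo : x = o
      · refine Or.inr ⟨a, ?_⟩
        rw [seqAlloc_cons_some h, if_pos rfl]
        subst hxo
        exact Finset.mem_insert_self _ _
      · have hx' : x ∈ rem.erase o := Finset.mem_erase.mpr ⟨hxo, hx⟩
        rcases ih hx' with h1 | ⟨b, hb⟩
        · exact Or.inl h1
        · refine Or.inr ⟨b, ?_⟩
          rw [seqAlloc_cons_some h]
          split
          · exact Finset.mem_insert_of_mem hb
          · exact hb

lemma seqAlloc_append (l₁ l₂ : List A) (rem : Finset I) (b : A) :
    seqAlloc prefs (l₁ ++ l₂) rem b =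
      seqAlloc prefs l₁ rem b ∪ seqAlloc prefs l₂ (remAfter prefs l₁ rem) b := by
  induction l₁ generalizing rem with
  | nil => simp [seqAlloc_nil, remAfter_nil]
  | cons a rest ih =>
    rcases h : (prefs a).find? (fun o => decide (o ∈ rem)) with _ | o
    · rw [List.cons_append, seqAlloc_cons_none h, seqAlloc_cons_none h, remAfter_cons_none h]
      exact ih rem
    · rw [List.cons_append, seqAlloc_cons_some h, seqAlloc_cons_some h, remAfter_cons_some h]
      split
      · rw [ih, Finset.insert_union]
      · exact ih _

lemma remAfter_append (l₁ l₂ : List A) (rem : Finset I) :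
    remAfter prefs (l₁ ++ l₂) rem = remAfter prefs l₂ (remAfter prefs l₁ rem) := by
  induction l₁ generalizing rem with
  | nil => simp [remAfter_nil]
  | cons a rest ih =>
    rcases h : (prefs a).find? (fun o => decide (o ∈ rem)) with _ | o
    · rw [List.cons_append, remAfter_cons_none h, remAfter_cons_none h]; exact ih rem
    · rw [List.cons_append, remAfter_cons_some h, remAfter_cons_some h]; exact ih _

lemma seqAlloc_empty_of_not_mem {l : List A} {rem : Finset I} {b : A} (hb : b ∉ l) :
    seqAlloc prefs l rem b = ∅ := by
  induction l generalizing rem with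
  | nil => rfl
  | cons a rest ih =>
    have hba : b ≠ a := fun hc => hb (hc ▸ List.mem_cons_self (a := a) (l := rest))
    have hbr : b ∉ rest := fun hc => hb (List.mem_cons_of_mem a hc)
    rcases h : (prefs a).find? (fun o => decide (o ∈ rem)) with _ | o
    · rw [seqAlloc_cons_none h]; exact ih hbr
    · rw [seqAlloc_cons_some h, if_neg hba]; exact ih hbr

end Infra

section Infra2
variable {A I : Type*} [DecidableEq A] [DecidableEq I] {prefs : A → List I}

lemma find?_min {p : I → Bool} {l : List I} {o x : I} (h : l.find? p = some o)
    (hx : x ∈ l) (hpx : p x = true) : l.idxOf o ≤ l.idxOf x := by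
  induction l with
  | nil => simp at h
  | cons y rest ih =>
    by_cases hy : p y = true
    · rw [List.find?_cons_of_pos hy] at h
      cases h
      simp [List.idxOf_cons_self]
    · have hy' : ¬ (p y = true) := hy
      rw [List.find?_cons_of_neg hy'] at h
      have ho : o ≠ y := fun hc => hy (hc ▸ List.find?_some h)
      have hxy : x ≠ y := fun hc => hy (hc ▸ hpx)
      have hx' : x ∈ rest := by
        rcases List.mem_cons.mp hx with rfl | hh
        · exact absurd hpx hy
        · exact hh
      rw [List.idxOf_cons_ne _ ho.symm, List.idxOf_cons_ne _ hxy.symm]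
      exact Nat.succ_le_succ (ih h hx')

lemma find?_prefix {p : I → Bool} {l₁ l₂ : List I} {x : I} (h1 : ∀ y ∈ l₁, p y = false)
    (hx : p x = true) : (l₁ ++ x :: l₂).find? p = some x := by
  induction l₁ with
  | nil => simpa using List.find?_cons_of_pos (l := l₂) hx
  | cons y rest ih =>
    rw [List.cons_append, List.find?_cons_of_neg (by simp [h1 y List.mem_cons_self])]
    exact ih (fun z hz => h1 z (List.mem_cons_of_mem _ hz))

lemma seqAlloc_greedy {l : List A} {rem : Finset I} {b : A} {o x : I}
    (ho : o ∈ seqAlloc prefs l rem b) (hx : x ∈ remAfter prefs l rem) (hxp : x ∈ prefs b) :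
    (prefs b).idxOf o ≤ (prefs b).idxOf x := by
  induction l generalizing rem with
  | nil => simp [seqAlloc_nil] at ho
  | cons a rest ih =>
    rcases h : (prefs a).find? (fun o => decide (o ∈ rem)) with _ | o'
    · rw [seqAlloc_cons_none h] at ho
      rw [remAfter_cons_none h] at hx
      exact ih ho hx
    · rw [seqAlloc_cons_some h] at ho
      rw [remAfter_cons_some h] at hx
      by_cases hba : b = a
      · rw [if_pos hba] at ho
        rcases Finset.mem_insert.mp ho with rfl | ho'
        · have hxrem : x ∈ rem := (Finset.erase_subset _ _) (remAfter_subset _ _ hx)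
          subst hba
          exact find?_min h hxp (by simpa using hxrem)
        · exact ih ho' hx
      · rw [if_neg hba] at ho
        exact ih ho hx

lemma remAfter_card {l : List A} {rem : Finset I}
    (hcov : ∀ b, ∀ o ∈ rem, o ∈ prefs b) (hlen : l.length ≤ rem.card) :
    (remAfter prefs l rem).card = rem.card - l.length := by
  induction l generalizing rem with
  | nil => simp [remAfter_nil]
  | cons a rest ih =>
    obtain ⟨y, hyr⟩ : rem.Nonempty := Finset.card_pos.mp (lt_of_lt_of_le (Nat.succ_pos _) hlen)
    obtain ⟨o, h⟩ : ∃ o, (prefs a).find? (fun o => decide (o ∈ rem)) = some o := by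
      rw [← Option.isSome_iff_exists, List.find?_isSome]
      exact ⟨y, hcov a y hyr, by simpa⟩
    have ho : o ∈ rem := by simpa using List.find?_some h
    have hcard : (rem.erase o).card = rem.card - 1 := Finset.card_erase_of_mem ho
    simp only [List.length_cons] at hlen
    rw [remAfter_cons_some h,
      ih (fun b y hy => hcov b y ((Finset.erase_subset _ _) hy)) (by omega), hcard]
    simp only [List.length_cons]
    omega

lemma seqAlloc_card {l : List A} {rem : Finset I} {b : A}
    (hcov : ∀ c, ∀ o ∈ rem, o ∈ prefs c) (hlen : l.length ≤ rem.card) :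
    (seqAlloc prefs l rem b).card = l.count b := by
  induction l generalizing rem with
  | nil => simp [seqAlloc_nil]
  | cons a rest ih =>
    obtain ⟨y, hyr⟩ : rem.Nonempty := Finset.card_pos.mp (lt_of_lt_of_le (Nat.succ_pos _) hlen)
    obtain ⟨o, h⟩ : ∃ o, (prefs a).find? (fun o => decide (o ∈ rem)) = some o := by
      rw [← Option.isSome_iff_exists, List.find?_isSome]
      exact ⟨y, hcov a y hyr, by simpa⟩
    have ho : o ∈ rem := by simpa using List.find?_some h
    have hcard : (rem.erase o).card = rem.card - 1 := Finset.card_erase_of_mem ho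
    simp only [List.length_cons] at hlen
    have hcov' : ∀ c, ∀ z ∈ rem.erase o, z ∈ prefs c :=
      fun c z hz => hcov c z ((Finset.erase_subset _ _) hz)
    have hlen' : rest.length ≤ (rem.erase o).card := by omega
    rw [seqAlloc_cons_some h]
    by_cases hba : b = a
    · rw [if_pos hba, Finset.card_insert_of_notMem
        (fun hc => Finset.notMem_erase o rem (seqAlloc_subset _ _ _ hc)), ih hcov' hlen']
      simp [List.count_cons, hba]
    · rw [if_neg hba, ih hcov' hlen']
      simp [List.count_cons, hba, Ne.symm hba]

lemma count_take_mono {α : Type*} [DecidableEq α] (l : List α) (x : α) {u v : ℕ} (h : u ≤ v) :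
    (l.take u).count x ≤ (l.take v).count x := by
  have : l.take u = (l.take v).take u := by rw [List.take_take, min_eq_left h]
  rw [this]
  exact (List.take_sublist _ _).count_le x

lemma take_succ_get {α : Type*} (l : List α) {t : ℕ} (ht : t < l.length) :
    l.take (t+1) = l.take t ++ [l.get ⟨t, ht⟩] := by
  rw [List.take_succ, List.getElem?_eq_getElem ht]; rfl

lemma exists_pos_count {α : Type*} [DecidableEq α] {x : α} : ∀ {l : List α} {i : ℕ},
    i < l.count x → ∃ t, ∃ ht : t < l.length, l.get ⟨t, ht⟩ = x ∧ (l.take t).count x = i := by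
  intro l
  induction l with
  | nil => simp
  | cons a rest ih =>
    intro i hi
    by_cases hax : a = x
    · subst hax
      cases i with
      | zero => exact ⟨0, by simp, by simp, by simp⟩
      | succ j =>
        have hj : j < rest.count a := by
          rw [List.count_cons_self] at hi
          omega
        obtain ⟨t, ht, h1, h2⟩ := ih hj
        refine ⟨t+1, by simpa using Nat.succ_lt_succ ht, by simpa using h1, ?_⟩
        rw [List.take_succ_cons, List.count_cons_self, h2]
    · have hxa : x ≠ a := Ne.symm hax
      have hi' : i < rest.count x := by
        rwa [List.count_cons_of_ne hax] at hi
      obtain ⟨t, ht, h1, h2⟩ := ih hi'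
      refine ⟨t+1, by simpa using Nat.succ_lt_succ ht, by simpa using h1, ?_⟩
      rw [List.take_succ_cons, List.count_cons_of_ne hax, h2]

lemma pos_lt_pos {α : Type*} [DecidableEq α] {x : α} {l : List α} {t t' : ℕ}
    {i j : ℕ}
    (hc : (l.take t).count x = i) (hc' : (l.take t').count x = j) (hij : i < j) : t < t' := by
  by_contra hle
  push_neg at hle
  have := count_take_mono l x hle
  omega

end Infra2

section Main
variable {I : Type*} [DecidableEq I]

lemma fin2 (b : Fin 2) : b = 0 ∨ b = 1 := by omega

lemma fin2_count (l : List (Fin 2)) : l.count 0 + l.count 1 = l.length := by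
  induction l with
  | nil => rfl
  | cons a rest ih =>
    rcases fin2 a with rfl | rfl <;>
      simp [List.count_cons, ih] <;> omega

lemma covers_of {O : Finset I} {p1 p2 : List I} (hp1 : IsReport O p1) (hp2 : IsReport O p2)
    {rem : Finset I} (hrem : rem ⊆ O) :
    ∀ b : Fin 2, ∀ o ∈ rem, o ∈ (fun a : Fin 2 => if a = 0 then p1 else p2) b := by
  intro b o ho
  dsimp only
  split
  · exact (hp1.2 o).mpr (hrem ho)
  · exact (hp2.2 o).mpr (hrem ho)

lemma seqAlloc_prefix_subset {A : Type*} [DecidableEq A] {prefs : A → List I}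
    (l : List A) (u : ℕ) (rem : Finset I) (b : A) :
    seqAlloc prefs (l.take u) rem b ⊆ seqAlloc prefs l rem b := by
  conv_rhs => rw [← List.take_append_drop u l]
  rw [seqAlloc_append]
  exact Finset.subset_union_left

lemma get_not_mem_take {l : List I} (hnd : l.Nodup) {i : ℕ} (hi : i < l.length) :
    l.get ⟨i, hi⟩ ∉ l.take i := by
  intro hmem
  have hnd' : (l.take i ++ l.drop i).Nodup := by rw [List.take_append_drop]; exact hnd
  apply List.disjoint_of_nodup_append hnd' hmem
  rw [List.drop_eq_getElem_cons hi]
  exact List.mem_cons_self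

lemma ach_imp_iii {O : Finset I} {π : List (Fin 2)} (hπ : π.length = O.card)
    {p2 : List I} (hp2 : IsReport O p2)
    {as : List I} (hnd : as.Nodup) (hasO : ∀ o ∈ as, o ∈ O)
    (hsorted : as.Pairwise (Prefers p2))
    {r : List I} (hr : IsReport O r)
    (hach : Achievable p2 π O as.toFinset) :
    ∀ (i : ℕ) (hi : i < as.length), ∃ (t : ℕ) (ht : t < π.length),
      π.get ⟨t, ht⟩ = 0 ∧ (π.take t).count 0 = i ∧
      ∀ o ∈ alloc2 r p2 (π.take t) O 1, Prefers p2 o (as.get ⟨i, hi⟩) := by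
  obtain ⟨p1, hp1, hS⟩ := hach
  unfold alloc2 at hS ⊢
  intro i hi
  set a := as.get ⟨i, hi⟩ with ha_def
  have haO : a ∈ O := hasO a (List.get_mem _ _)
  set prefs1 := fun b : Fin 2 => if b = 0 then p1 else p2 with hprefs1
  set prefsr := fun b : Fin 2 => if b = 0 then r else p2 with hprefsr
  have hp11 : prefs1 1 = p2 := rfl
  have hpr1 : prefsr 1 = p2 := rfl
  have hcov1 : ∀ {rem : Finset I}, rem ⊆ O → ∀ b : Fin 2, ∀ o ∈ rem, o ∈ prefs1 b :=
    fun h => covers_of hp1 hp2 h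
  have hcovr : ∀ {rem : Finset I}, rem ⊆ O → ∀ b : Fin 2, ∀ o ∈ rem, o ∈ prefsr b :=
    fun h => covers_of hr hp2 h
  -- agent 1 gets at least as.length items, so π has at least as.length zeros
  have hScard : as.length ≤ π.count 0 := by
    have h1 : (seqAlloc prefs1 π O 0).card = π.count 0 :=
      seqAlloc_card (hcov1 (subset_refl O)) (le_of_eq hπ)
    have h2 := Finset.card_le_card hS
    rw [List.toFinset_card_of_nodup hnd] at h2
    omega
  have hi' : i < π.count 0 := lt_of_lt_of_le hi hScard
  obtain ⟨t, ht, hget, hcnt⟩ := exists_pos_count hi'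
  refine ⟨t, ht, hget, hcnt, ?_⟩
  by_contra hbad
  push_neg at hbad
  obtain ⟨o, hoB, hno⟩ := hbad
  simp only [Prefers, not_lt] at hno
  -- W = items weakly p2-preferred to a
  set W := O.filter (fun x => p2.idxOf x ≤ p2.idxOf a) with hW
  set Stop := (as.take (i+1)).toFinset with hStop
  have htO : t ≤ O.card := by omega
  have hlentake : ∀ u ≤ t, (π.take u).length = u := by
    intro u hu
    rw [List.length_take]
    omega
  have hStopW : Stop ⊆ W := by
    intro x hx
    rw [hStop, List.mem_toFinset] at hx
    obtain ⟨j, hj, hjx⟩ := List.mem_take_iff_getElem.mp hx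
    have hjas : j < as.length := lt_of_lt_of_le hj (le_trans (min_le_right _ _) le_rfl)
    have hxO : x ∈ O := hasO x (hjx ▸ List.getElem_mem hjas)
    have hji : j ≤ i := by omega
    refine Finset.mem_filter.mpr ⟨hxO, ?_⟩
    rcases eq_or_lt_of_le hji with rfl | hji'
    · have : x = a := by rw [← hjx, ha_def]; rfl
      rw [this]
    · have := List.pairwise_iff_get.mp hsorted ⟨j, hjas⟩ ⟨i, hi⟩ hji'
      rw [Prefers] at this
      have hxj : as.get ⟨j, hjas⟩ = x := hjx
      rw [hxj] at this
      exact le_of_lt this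
  have hndtake : (as.take (i+1)).Nodup := (List.take_sublist _ _).nodup hnd
  have hStopCard : Stop.card = i + 1 := by
    rw [hStop, List.toFinset_card_of_nodup hndtake, List.length_take]
    omega
  have hWcard_ge : i + 1 ≤ W.card := hStopCard ▸ Finset.card_le_card hStopW
  have hStopS : Stop ⊆ as.toFinset := by
    intro x hx
    rw [hStop, List.mem_toFinset] at hx
    exact List.mem_toFinset.mpr ((List.take_sublist _ _).subset hx)
  have hB_disj_S : ∀ u, ∀ x ∈ seqAlloc prefs1 (π.take u) O 1, x ∉ as.toFinset := by
    intro u x hx hxS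
    have hx1 : x ∈ seqAlloc prefs1 π O 1 := seqAlloc_prefix_subset π u O 1 hx
    exact seqAlloc_disjoint (show (0:Fin 2) ≠ 1 by decide) (hS hxS) hx1
  -- Claim N : W still has remaining items at every step up to t
  have hclaimN : ∀ u ≤ t, (W ∩ remAfter prefs1 (π.take u) O).Nonempty := by
    intro u hu
    rw [Finset.nonempty_iff_ne_empty]
    intro hempty
    have hsub : W ⊆ seqAlloc prefs1 (π.take u) O 0 ∪ (seqAlloc prefs1 (π.take u) O 1 ∩ W) := by
      intro x hxW
      have hxO : x ∈ O := (Finset.mem_filter.mp hxW).1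
      rcases mem_remAfter_or_alloc (prefs := prefs1) (l := π.take u) hxO with hR | ⟨b, hb⟩
      · exact absurd (Finset.mem_inter.mpr ⟨hxW, hR⟩) (by rw [hempty]; simp)
      · rcases fin2 b with rfl | rfl
        · exact Finset.mem_union_left _ hb
        · exact Finset.mem_union_right _ (Finset.mem_inter.mpr ⟨hb, hxW⟩)
    have h1 : (seqAlloc prefs1 (π.take u) O 0).card = (π.take u).count 0 :=
      seqAlloc_card (hcov1 (subset_refl O)) (by rw [hlentake u hu]; omega)
    have h2 : (π.take u).count 0 ≤ i := by rw [← hcnt]; exact count_take_mono π 0 hu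
    have h3 : (seqAlloc prefs1 (π.take u) O 1 ∩ W) ⊆ W \ Stop := by
      intro x hx
      obtain ⟨hx1, hxW⟩ := Finset.mem_inter.mp hx
      exact Finset.mem_sdiff.mpr ⟨hxW, fun hxStop => hB_disj_S u x hx1 (hStopS hxStop)⟩
    have h4 : (W \ Stop).card = W.card - (i+1) := by
      rw [Finset.card_sdiff_of_subset hStopW, hStopCard]
    have h5 := Finset.card_le_card hsub
    have h6 := Finset.card_union_le (seqAlloc prefs1 (π.take u) O 0)
      (seqAlloc prefs1 (π.take u) O 1 ∩ W)
    have h7 := Finset.card_le_card h3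
    omega
  -- Claim P : every item agent 2 receives up to step t is in W
  have hclaimP : ∀ u ≤ t, seqAlloc prefs1 (π.take u) O 1 ⊆ W := by
    intro u
    induction u with
    | zero =>
      intro _
      rw [List.take_zero, seqAlloc_nil]
      exact Finset.empty_subset _
    | succ v ih =>
      intro hv
      have hvt : v ≤ t := by omega
      have hvlen : v < π.length := by omega
      rw [take_succ_get π hvlen, seqAlloc_append]
      apply Finset.union_subset (ih hvt)
      set R := remAfter prefs1 (π.take v) O with hRdef
      have hRO : R ⊆ O := remAfter_subset _ _
      rcases fin2 (π.get ⟨v, hvlen⟩) with hg | hg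
      · rw [hg, seqAlloc_empty_of_not_mem (by decide : (1:Fin 2) ∉ [(0:Fin 2)])]
        exact Finset.empty_subset _
      · rw [hg]
        rcases hfind : (prefs1 1).find? (fun o => decide (o ∈ R)) with _ | o'
        · rw [seqAlloc_cons_none hfind, seqAlloc_nil]
          exact Finset.empty_subset _
        · rw [seqAlloc_cons_some hfind, if_pos rfl, seqAlloc_nil]
          intro x hx
          rcases Finset.mem_insert.mp hx with rfl | hx'
          swap
          · simp at hx'
          obtain ⟨y, hy⟩ := hclaimN v hvt
          obtain ⟨hyW, hyR⟩ := Finset.mem_inter.mp hy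
          have hxR : x ∈ R := by simpa using List.find?_some hfind
          have hxO : x ∈ O := hRO hxR
          by_cases hyx : y = x
          · exact hyx ▸ hyW
          · have hyR' : y ∈ remAfter prefs1 [(1:Fin 2)] R := by
              rw [remAfter_cons_some hfind, remAfter_nil]
              exact Finset.mem_erase.mpr ⟨hyx, hyR⟩
            have hxalloc : x ∈ seqAlloc prefs1 [(1:Fin 2)] R 1 := by
              rw [seqAlloc_cons_some hfind, if_pos rfl, seqAlloc_nil]
              exact Finset.mem_insert_self _ _
            have hyO : y ∈ O := (Finset.mem_filter.mp hyW).1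
            have hyp2 : y ∈ prefs1 1 := by rw [hp11]; exact (hp2.2 y).mpr hyO
            have hgr := seqAlloc_greedy hxalloc hyR' hyp2
            rw [hp11] at hgr
            have hya := (Finset.mem_filter.mp hyW).2
            exact Finset.mem_filter.mpr ⟨hxO, le_trans hgr hya⟩
  -- achieving side : t < W.card
  have hcard1 : (seqAlloc prefs1 (π.take t) O 1).card = (π.take t).count 1 :=
    seqAlloc_card (hcov1 (subset_refl O)) (by rw [hlentake t le_rfl]; omega)
  have hc01 : (π.take t).count 0 + (π.take t).count 1 = t := by
    rw [fin2_count, hlentake t le_rfl]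
  have hBsub : seqAlloc prefs1 (π.take t) O 1 ⊆ W \ Stop := fun x hx =>
    Finset.mem_sdiff.mpr ⟨hclaimP t le_rfl hx, fun hxS => hB_disj_S t x hx (hStopS hxS)⟩
  have h5 := Finset.card_le_card hBsub
  have h6 : (W \ Stop).card = W.card - (i+1) := by
    rw [Finset.card_sdiff_of_subset hStopW, hStopCard]
  -- canonical side : W.card ≤ t
  have hop2 : o ∈ p2 := (hp2.2 o).mpr (seqAlloc_subset _ _ _ hoB)
  have hWgone : ∀ x ∈ W, x ∉ remAfter prefsr (π.take t) O := by
    intro x hxW hxR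
    have hxO := (Finset.mem_filter.mp hxW).1
    have hxo : x ≠ o := fun hc => not_mem_remAfter_of_mem_seqAlloc hoB (hc ▸ hxR)
    have hxp2 : x ∈ prefsr 1 := by rw [hpr1]; exact (hp2.2 x).mpr hxO
    have hgr := seqAlloc_greedy hoB hxR hxp2
    rw [hpr1] at hgr
    have hxa := (Finset.mem_filter.mp hxW).2
    have heq : p2.idxOf x = p2.idxOf o := le_antisymm (hxa.trans hno) hgr
    exact hxo ((List.idxOf_inj ((hp2.2 x).mpr hxO)).mp heq)
  have hRcard : (remAfter prefsr (π.take t) O).card = O.card - t := by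
    rw [remAfter_card (hcovr (subset_refl O)) (by rw [hlentake t le_rfl]; omega),
      hlentake t le_rfl]
  have hWsubdiff : W ⊆ O \ remAfter prefsr (π.take t) O := fun x hx =>
    Finset.mem_sdiff.mpr ⟨(Finset.mem_filter.mp hx).1, hWgone x hx⟩
  have hdiffcard : (O \ remAfter prefsr (π.take t) O).card
      = O.card - (remAfter prefsr (π.take t) O).card :=
    Finset.card_sdiff_of_subset (remAfter_subset _ _)
  have h8 := Finset.card_le_card hWsubdiff
  omega

lemma iii_imp_ii {O : Finset I} {π : List (Fin 2)} (hπ : π.length = O.card)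
    {p2 : List I} (hp2 : IsReport O p2)
    {as : List I} (hnd : as.Nodup) (hasO : ∀ o ∈ as, o ∈ O)
    {r : List I} (hr : IsReport O r) (hpre : as <+: r)
    (hiii : ∀ (i : ℕ) (hi : i < as.length), ∃ (t : ℕ) (ht : t < π.length),
      π.get ⟨t, ht⟩ = 0 ∧ (π.take t).count 0 = i ∧
      ∀ o ∈ alloc2 r p2 (π.take t) O 1, Prefers p2 o (as.get ⟨i, hi⟩)) :
    as.toFinset ⊆ alloc2 r p2 π O 0 := by
  unfold alloc2 at hiii ⊢
  set prefsr := fun b : Fin 2 => if b = 0 then r else p2 with hprefsr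
  -- the step lemma
  have hstep : ∀ (i : ℕ) (hi : i < as.length) (t : ℕ) (ht : t < π.length),
      π.get ⟨t, ht⟩ = 0 → (π.take t).count 0 = i →
      (∀ o ∈ seqAlloc prefsr (π.take t) O 1, Prefers p2 o (as.get ⟨i, hi⟩)) →
      seqAlloc prefsr (π.take t) O 0 = (as.take i).toFinset →
      seqAlloc prefsr (π.take (t+1)) O 0 = (as.take (i+1)).toFinset := by
    intro i hi t ht hget hcnt h3 hQ
    set a := as.get ⟨i, hi⟩ with ha_def
    set R := remAfter prefsr (π.take t) O with hRdef
    have haO : a ∈ O := hasO a (List.get_mem _ _)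
    have haR : a ∈ R := by
      by_contra haR
      rcases mem_remAfter_or_alloc (prefs := prefsr) (l := π.take t) haO with hc | ⟨b, hb⟩
      · exact haR hc
      · rcases fin2 b with rfl | rfl
        · rw [hQ] at hb
          exact (get_not_mem_take hnd hi) (List.mem_toFinset.mp hb)
        · have := h3 a hb
          simp [Prefers] at this
    have hfind : (prefsr 0).find? (fun o => decide (o ∈ R)) = some a := by
      show r.find? (fun o => decide (o ∈ R)) = some a
      obtain ⟨u, hu⟩ := hpre
      have hdrop : as.drop i = a :: as.drop (i+1) := List.drop_eq_getElem_cons hi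
      have hr' : r = as.take i ++ (a :: (as.drop (i+1) ++ u)) := by
        rw [← hu]
        conv_lhs => rw [← List.take_append_drop i as, hdrop]
        simp
      rw [hr']
      apply find?_prefix
      · intro y hy
        have hyA : y ∈ seqAlloc prefsr (π.take t) O 0 := by
          rw [hQ]; exact List.mem_toFinset.mpr hy
        simpa using not_mem_remAfter_of_mem_seqAlloc hyA
      · simpa using haR
    rw [take_succ_get π ht, hget, seqAlloc_append, hQ, ← hRdef]
    have hsing : seqAlloc prefsr [(0:Fin 2)] R 0 = {a} := by
      rw [seqAlloc_cons_some hfind, if_pos rfl, seqAlloc_nil]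
      rfl
    rw [hsing, take_succ_get as hi, List.toFinset_append, ← ha_def]
    rfl
  -- Q(i) by induction
  have hQ : ∀ i, i ≤ as.length → ∀ (t : ℕ) (ht : t < π.length), π.get ⟨t, ht⟩ = 0 →
      (π.take t).count 0 = i → seqAlloc prefsr (π.take t) O 0 = (as.take i).toFinset := by
    intro i
    induction i with
    | zero =>
      intro _ t ht hget hcnt
      rw [seqAlloc_empty_of_not_mem (List.count_eq_zero.mp hcnt)]
      simp
    | succ j ihj =>
      intro hj t' ht' hget' hcnt'
      have hjlt : j < as.length := by omega
      obtain ⟨t, ht, hget, hcnt, h3⟩ := hiii j hjlt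
      have hQj := ihj (by omega) t ht hget hcnt
      have hstepj := hstep j hjlt t ht hget hcnt h3 hQj
      have htlt : t < t' := pos_lt_pos hcnt hcnt' (by omega)
      have hcnt1 : (π.take (t+1)).count 0 = j + 1 := by
        rw [take_succ_get π ht, List.count_append, hcnt, hget]
        simp
      have hdecomp : π.take t' = π.take (t+1) ++ (π.drop (t+1)).take (t' - (t+1)) := by
        rw [← List.take_add]
        congr 1
        omega
      have hseg0 : (0:Fin 2) ∉ (π.drop (t+1)).take (t' - (t+1)) := by
        apply List.count_eq_zero.mp
        have : (π.take t').count 0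
            = (π.take (t+1)).count 0 + ((π.drop (t+1)).take (t' - (t+1))).count 0 := by
          rw [hdecomp, List.count_append]
        omega
      rw [hdecomp, seqAlloc_append, hstepj, seqAlloc_empty_of_not_mem hseg0]
      simp
  -- conclusion
  intro x hx
  obtain ⟨⟨i, hi⟩, hxi⟩ := List.get_of_mem (List.mem_toFinset.mp hx)
  obtain ⟨t, ht, hget, hcnt, h3⟩ := hiii i hi
  have hQi := hQ i (le_of_lt hi) t ht hget hcnt
  have hstepi := hstep i hi t ht hget hcnt h3 hQi
  have hx1 : x ∈ seqAlloc prefsr (π.take (t+1)) O 0 := by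
    rw [hstepi, List.mem_toFinset, take_succ_get as hi, hxi]
    exact List.mem_append_right _ (List.mem_singleton_self x)
  have hdec : π = π.take (t+1) ++ π.drop (t+1) := (List.take_append_drop _ _).symm
  rw [hdec, seqAlloc_append]
  exact Finset.mem_union_left _ hx1


end Main

/-- Let `S = {a₁, …, a_k}` with `a₁ ≻₂ a₂ ≻₂ ⋯ ≻₂ a_k` (the list
`as`), and let `r` be a canonical report for `S`.  TFAE:
(i) `S` is achievable by agent 1;
(ii) agent 1's allocation under `(r, p2)` includes `S`;
(iii) in the run of sequential allocation on `(r, p2)`, for each `i`, at the step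
at which agent 1 makes his `(i+1)`-st pick, every item agent 2 has received before
that step is strictly ≻₂-preferred to `aᵢ₊₁`. -/
theorem statement2 {I : Type*} [DecidableEq I]
    (O : Finset I) (π : List (Fin 2)) (hπ : π.length = O.card)
    (p2 : List I) (hp2 : IsReport O p2)
    (as : List I) (hnd : as.Nodup) (hasO : ∀ o ∈ as, o ∈ O)
    (hsorted : as.Pairwise (Prefers p2))
    (r : List I) (hr : IsReport O r) (hpre : as <+: r) :
    (Achievable p2 π O as.toFinset ↔ as.toFinset ⊆ alloc2 r p2 π O 0) ∧
    (as.toFinset ⊆ alloc2 r p2 π O 0 ↔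
      ∀ (i : ℕ) (hi : i < as.length), ∃ (t : ℕ) (ht : t < π.length),
        π.get ⟨t, ht⟩ = 0 ∧ (π.take t).count 0 = i ∧
        ∀ o ∈ alloc2 r p2 (π.take t) O 1, Prefers p2 o (as.get ⟨i, hi⟩)) := by
  refine ⟨⟨fun h1 => iii_imp_ii hπ hp2 hnd hasO hr hpre
      (ach_imp_iii hπ hp2 hnd hasO hsorted hr h1),
    fun h2 => ⟨r, hr, h2⟩⟩,
    fun h2 => ach_imp_iii hπ hp2 hnd hasO hsorted hr ⟨r, hr, h2⟩,
    iii_imp_ii hπ hp2 hnd hasO hr hpre⟩
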